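/- There exist f, g ∈ ℓ²(ℕ) whose convolution f * g has infinite ℓ² norm; consequently, the non-commutative white noise space L²(ℓ̃, counting measure) is not closed under the Wick (convolution) product. -/

import Mathlib

/-- The Wick product (monoid convolution) on the free monoid on ℕ:
`(f ⊗ g)_γ = ∑_{αβ = γ} f_α g_β`. -/
noncomputable def wick (f g : FreeMonoid ℕ → ℂ) (γ : FreeMonoid ℕ) : ℂ :=
  ∑ j ∈ Finset.range ((FreeMonoid.toList γ).length + 1),
    f (FreeMonoid.ofList ((FreeMonoid.toList γ).take j)) *
      g (FreeMonoid.ofList ((FreeMonoid.toList γ).drop j))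


noncomputable def ff (n : ℕ) : ℂ := ((1 / ((n:ℝ)+1) ^ ((3:ℝ)/4) : ℝ) : ℂ)

lemma pos_base (n : ℕ) : (0:ℝ) < (n:ℝ)+1 := by positivity

lemma norm_ff (n : ℕ) : ‖ff n‖ = 1 / ((n:ℝ)+1) ^ ((3:ℝ)/4) := by
  rw [ff, Complex.norm_real, Real.norm_of_nonneg (by positivity)]

lemma summable_ff : Summable (fun n => ‖ff n‖ ^ 2) := by
  have h : (fun n : ℕ => ‖ff n‖ ^ 2) = fun n : ℕ => 1 / ((n:ℝ)+1) ^ ((3:ℝ)/2) := by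
    funext n
    rw [norm_ff, div_pow, one_pow, ← Real.rpow_natCast (((n:ℝ)+1) ^ ((3:ℝ)/4)) 2,
      ← Real.rpow_mul (by positivity)]
    norm_num
  rw [h]
  have := (Real.summable_one_div_nat_rpow (p := (3:ℝ)/2)).mpr (by norm_num)
  have h2 := (summable_nat_add_iff 1).mpr this
  refine h2.congr fun n => ?_
  push_cast
  ring_nf

lemma conv_lb (n : ℕ) :
    1 / ((n:ℝ)+1) ≤ ‖∑ k ∈ Finset.range (n + 1), ff k * ff (n - k)‖ ^ 2 := by
  set r : ℕ → ℝ := fun m => 1 / ((m:ℝ)+1) ^ ((3:ℝ)/4) with hr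
  have hnorm : ‖∑ k ∈ Finset.range (n + 1), ff k * ff (n - k)‖
      = ∑ k ∈ Finset.range (n + 1), r k * r (n - k) := by
    have : (∑ k ∈ Finset.range (n + 1), ff k * ff (n - k))
        = ((∑ k ∈ Finset.range (n + 1), r k * r (n - k) : ℝ) : ℂ) := by
      rw [Complex.ofReal_sum]
      exact Finset.sum_congr rfl fun k _ => by rw [hr]; simp [ff]
    rw [this, Complex.norm_real, Real.norm_of_nonneg
      (Finset.sum_nonneg fun k _ => by positivity)]
  rw [hnorm]
  -- each term ≥ 1/((n+1)^(3/2))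
  have hterm : ∀ k ∈ Finset.range (n + 1),
      1 / ((n:ℝ)+1) ^ ((3:ℝ)/2) ≤ r k * r (n - k) := by
    intro k hk
    have hk' : k ≤ n := Nat.lt_succ_iff.mp (Finset.mem_range.mp hk)
    have h1 : ((k:ℝ)+1) ^ ((3:ℝ)/4) ≤ ((n:ℝ)+1) ^ ((3:ℝ)/4) :=
      Real.rpow_le_rpow (by positivity) (by have : (k:ℝ) ≤ n := Nat.cast_le.mpr hk'; linarith) (by norm_num)
    have h2 : (((n-k:ℕ):ℝ)+1) ^ ((3:ℝ)/4) ≤ ((n:ℝ)+1) ^ ((3:ℝ)/4) := by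
      apply Real.rpow_le_rpow (by positivity) ?_ (by norm_num)
      have : (n - k : ℕ) ≤ n := Nat.sub_le n k
      have : ((n - k : ℕ):ℝ) ≤ n := Nat.cast_le.mpr this
      linarith
    have hmul : ((n:ℝ)+1) ^ ((3:ℝ)/4) * ((n:ℝ)+1) ^ ((3:ℝ)/4) = ((n:ℝ)+1) ^ ((3:ℝ)/2) := by
      rw [← Real.rpow_add (pos_base n)]; norm_num
    rw [hr]
    simp only
    rw [div_mul_div_comm, one_mul, ← hmul]
    apply one_div_le_one_div_of_le
    · positivity
    · exact mul_le_mul h1 h2 (by positivity) (by positivity)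
  have hsum : ((n:ℝ)+1) * (1 / ((n:ℝ)+1) ^ ((3:ℝ)/2))
      ≤ ∑ k ∈ Finset.range (n + 1), r k * r (n - k) := by
    calc ((n:ℝ)+1) * (1 / ((n:ℝ)+1) ^ ((3:ℝ)/2))
        = ∑ _k ∈ Finset.range (n + 1), 1 / ((n:ℝ)+1) ^ ((3:ℝ)/2) := by
          rw [Finset.sum_const, Finset.card_range, nsmul_eq_mul]; push_cast; ring
      _ ≤ _ := Finset.sum_le_sum hterm
  have hS : (0:ℝ) ≤ ∑ k ∈ Finset.range (n + 1), r k * r (n - k) :=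
    le_trans (by positivity) hsum
  calc 1 / ((n:ℝ)+1) = (((n:ℝ)+1) * (1 / ((n:ℝ)+1) ^ ((3:ℝ)/2))) ^ 2 := by
        rw [mul_pow, div_pow, one_pow, ← Real.rpow_natCast (((n:ℝ)+1) ^ ((3:ℝ)/2)) 2,
          ← Real.rpow_mul (le_of_lt (pos_base n))]
        norm_num
        have hne : ((n:ℝ)+1) ≠ 0 := ne_of_gt (pos_base n)
        field_simp
    _ ≤ _ := by
        apply pow_le_pow_left₀ (by positivity) hsum 2

lemma not_summable_conv :
    ¬ Summable (fun n : ℕ => ‖∑ k ∈ Finset.range (n + 1), ff k * ff (n - k)‖ ^ 2) := by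
  intro h
  have h1 : Summable (fun n : ℕ => 1 / ((n:ℝ)+1)) :=
    h.of_nonneg_of_le (fun n => by positivity) (fun n => conv_lb n)
  have h2 : Summable (fun n : ℕ => 1 / ((n:ℝ))) := by
    rw [← summable_nat_add_iff 1]
    refine h1.congr fun n => ?_
    push_cast; ring_nf
  exact Real.not_summable_one_div_natCast h2

noncomputable def FF (γ : FreeMonoid ℕ) : ℂ :=
  if FreeMonoid.toList γ = List.replicate (FreeMonoid.toList γ).length 0
    then ff (FreeMonoid.toList γ).length else 0

def ee (n : ℕ) : FreeMonoid ℕ := FreeMonoid.ofList (List.replicate n 0)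

lemma ee_inj : Function.Injective ee := by
  intro a b h
  have := congrArg (fun γ => (FreeMonoid.toList γ).length) h
  simpa [ee] using this

lemma FF_ee (n : ℕ) : FF (ee n) = ff n := by
  simp [FF, ee]

lemma FF_zero_off {γ : FreeMonoid ℕ} (h : γ ∉ Set.range ee) : FF γ = 0 := by
  rw [FF, if_neg]
  intro hc
  exact h ⟨(FreeMonoid.toList γ).length, by
    simp [ee, ← hc]⟩

lemma summable_FF : Summable (fun α => ‖FF α‖ ^ 2) := by
  rw [← Function.Injective.summable_iff ee_inj
    (fun x hx => by rw [FF_zero_off hx]; simp)]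
  exact summable_ff.congr fun n => by simp [Function.comp, FF_ee]

lemma wick_FF (n : ℕ) : wick FF FF (ee n)
    = ∑ k ∈ Finset.range (n + 1), ff k * ff (n - k) := by
  rw [wick]
  have hlen : (FreeMonoid.toList (ee n)).length = n := by simp [ee]
  rw [show FreeMonoid.toList (ee n) = List.replicate n 0 by simp [ee], List.length_replicate]
  refine Finset.sum_congr rfl fun j hj => ?_
  have hj' : j ≤ n := Nat.lt_succ_iff.mp (Finset.mem_range.mp hj)
  rw [List.take_replicate, List.drop_replicate, min_eq_left hj']
  rw [show FreeMonoid.ofList (List.replicate j 0) = ee j from rfl,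
    show FreeMonoid.ofList (List.replicate (n - j) 0) = ee (n - j) from rfl,
    FF_ee, FF_ee]


/-- There exist `f, g ∈ ℓ²(ℕ)` whose convolution has infinite `ℓ²` norm; consequently
the non-commutative white noise space `L²(ℓ̃, counting measure)` is not closed under the
Wick (convolution) product. -/
theorem whiteNoise_not_closed_under_wick :
    (∃ f g : ℕ → ℂ, Summable (fun n => ‖f n‖ ^ 2) ∧ Summable (fun n => ‖g n‖ ^ 2) ∧
      ¬ Summable (fun n : ℕ => ‖∑ k ∈ Finset.range (n + 1), f k * g (n - k)‖ ^ 2)) ∧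
    ∃ F G : FreeMonoid ℕ → ℂ,
      Summable (fun α => ‖F α‖ ^ 2) ∧ Summable (fun α => ‖G α‖ ^ 2) ∧
        ¬ Summable (fun γ => ‖wick F G γ‖ ^ 2) := by
  refine ⟨⟨ff, ff, summable_ff, summable_ff, not_summable_conv⟩,
    ⟨FF, FF, summable_FF, summable_FF, ?_⟩⟩
  intro h
  apply not_summable_conv
  have := h.comp_injective ee_inj
  exact this.congr fun n => by simp [Function.comp, wick_FF]
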